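/- Let k > t ≥ 0, n > 2k - t and q be a prime power. The set S of all k-spaces of PG(n,q) that meet a fixed (t+2)-space Γ in at least a (t+1)-space is a maximal family of k-spaces pairwise intersecting in at least a t-space, and |S| = [n-t-2 choose k-t-2]_q + θ_{t+2}·([n-t-1 choose k-t-1]_q − [n-t-2 choose k-t-2]_q). -/

import Mathlib

/-- Gaussian binomial coefficient `[n choose k]_q` as a real number,
with the convention that it is `0` for `k < 0` (and for `k > n`). -/
noncomputable def gbin (q n : ℕ) (k : ℤ) : ℝ :=
  if 0 ≤ k then ∏ i ∈ Finset.range k.toNat, ((q:ℝ)^(n-i) - 1)/((q:ℝ)^(i+1) - 1) else 0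

/-- `θ_m = (q^{m+1}-1)/(q-1)`, the number of points of `PG(m,q)`. -/
noncomputable def theta (q m : ℕ) : ℝ := ((q:ℝ)^(m+1) - 1)/((q:ℝ) - 1)

open Module Submodule Finset Set
open scoped Classical

section Aux

lemma gbin_prod_eq (q m d : ℕ) (hq : 2 ≤ q) (hd : d ≤ m) :
    gbin q m (d : ℤ) * ∏ i ∈ Finset.range d, ((q:ℝ)^d - (q:ℝ)^i) =
      ∏ i ∈ Finset.range d, ((q:ℝ)^m - (q:ℝ)^i) := by
  have hq1 : (1:ℝ) < (q:ℝ) := by exact_mod_cast hq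
  have hB : ∀ j : ℕ, ((q:ℝ)^(j+1) - 1) ≠ 0 := by
    intro j
    have : (1:ℝ) < (q:ℝ)^(j+1) := one_lt_pow₀ hq1 (by omega)
    linarith
  have hgbin : gbin q m (d : ℤ) =
      (∏ i ∈ Finset.range d, ((q:ℝ)^(m-i) - 1)) / ∏ i ∈ Finset.range d, ((q:ℝ)^(i+1) - 1) := by
    rw [gbin, if_pos (by positivity), Int.toNat_natCast, Finset.prod_div_distrib]
  have hM : ∏ i ∈ Finset.range d, ((q:ℝ)^m - (q:ℝ)^i) =
      (∏ i ∈ Finset.range d, ((q:ℝ)^i)) * ∏ i ∈ Finset.range d, ((q:ℝ)^(m-i) - 1) := by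
    rw [← Finset.prod_mul_distrib]
    refine Finset.prod_congr rfl fun i hi => ?_
    rw [Finset.mem_range] at hi
    rw [mul_sub, mul_one, ← pow_add]
    congr 2
    omega
  have hP : ∏ i ∈ Finset.range d, ((q:ℝ)^d - (q:ℝ)^i) =
      (∏ i ∈ Finset.range d, ((q:ℝ)^i)) * ∏ i ∈ Finset.range d, ((q:ℝ)^(i+1) - 1) := by
    have h1 : ∏ i ∈ Finset.range d, ((q:ℝ)^(i+1) - 1) =
        ∏ i ∈ Finset.range d, ((q:ℝ)^(d-i) - 1) := by
      rw [← Finset.prod_range_reflect]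
      refine Finset.prod_congr rfl fun i hi => ?_
      rw [Finset.mem_range] at hi
      congr 2
      omega
    rw [h1, ← Finset.prod_mul_distrib]
    refine Finset.prod_congr rfl fun i hi => ?_
    rw [Finset.mem_range] at hi
    rw [mul_sub, mul_one, ← pow_add]
    congr 2
    omega
  rw [hgbin, hM, hP]
  have hBne : ∏ i ∈ Finset.range d, ((q:ℝ)^(i+1) - 1) ≠ 0 := Finset.prod_ne_zero_iff.2 fun i _ => hB i
  field_simp

lemma gbin_hyperplane (q d : ℕ) (hq : 2 ≤ q) :
    gbin q (d+1) (d : ℤ) = ((q:ℝ)^(d+1) - 1)/((q:ℝ) - 1) := by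
  have hq1 : (1:ℝ) < (q:ℝ) := by exact_mod_cast hq
  have hB : ∀ j : ℕ, ((q:ℝ)^(j+1) - 1) ≠ 0 := fun j => by
    have : (1:ℝ) < (q:ℝ)^(j+1) := one_lt_pow₀ hq1 (by omega)
    linarith
  rw [gbin, if_pos (by positivity), Int.toNat_natCast, Finset.prod_div_distrib]
  have hA : ∏ i ∈ Finset.range d, ((q:ℝ)^(d+1-i) - 1) =
      ∏ i ∈ Finset.range d, ((q:ℝ)^(i+2) - 1) := by
    rw [← Finset.prod_range_reflect]
    refine Finset.prod_congr rfl fun i hi => ?_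
    rw [Finset.mem_range] at hi
    congr 2
    omega
  have h1 : ∏ i ∈ Finset.range (d+1), ((q:ℝ)^(i+1) - 1) =
      (∏ i ∈ Finset.range d, ((q:ℝ)^(i+2) - 1)) * ((q:ℝ)^(0+1) - 1) :=
    Finset.prod_range_succ' (fun i => (q:ℝ)^(i+1) - 1) d
  have h2 : ∏ i ∈ Finset.range (d+1), ((q:ℝ)^(i+1) - 1) =
      (∏ i ∈ Finset.range d, ((q:ℝ)^(i+1) - 1)) * ((q:ℝ)^(d+1) - 1) :=
    Finset.prod_range_succ (fun i => (q:ℝ)^(i+1) - 1) d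
  rw [hA]
  have hBne : ∏ i ∈ Finset.range d, ((q:ℝ)^(i+1) - 1) ≠ 0 :=
    Finset.prod_ne_zero_iff.2 fun i _ => hB i
  have hq0 : (q:ℝ) - 1 ≠ 0 := by linarith
  rw [div_eq_div_iff hBne hq0]
  rw [h2] at h1
  rw [mul_comm] at h1
  simpa [pow_one] using h1.symm

variable {F V : Type*} [Field F] [AddCommGroup V] [Module F V]

open Module Submodule Finset Set

variable {F V : Type*} [Field F] [AddCommGroup V] [Module F V]

lemma finrank_sup_span_singleton [FiniteDimensional F V] (U : Submodule F V) {x : V}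
    (hx : x ∉ U) : finrank F ↥(U ⊔ F ∙ x) = finrank F U + 1 := by
  have h1 := Submodule.finrank_sup_add_finrank_inf_eq U (F ∙ x)
  have hx0 : x ≠ 0 := fun h => hx (h ▸ U.zero_mem)
  have h2 : finrank F ↥(F ∙ x) = 1 := finrank_span_singleton hx0
  have h3 : U ⊓ (F ∙ x) = ⊥ := by
    rw [eq_bot_iff]
    intro y hy
    rw [Submodule.mem_inf] at hy
    obtain ⟨hyU, hyx⟩ := hy
    rw [Submodule.mem_span_singleton] at hyx
    obtain ⟨c, rfl⟩ := hyx
    rcases eq_or_ne c 0 with rfl | hc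
    · simp
    · exact absurd (by simpa [hc] using U.smul_mem c⁻¹ hyU) hx
  rw [h3] at h1
  simp only [finrank_bot] at h1
  have h4 : U < U ⊔ F ∙ x := by
    refine lt_of_le_of_ne le_sup_left (fun h => hx ?_)
    have hmem : x ∈ U ⊔ F ∙ x := Submodule.mem_sup_right (Submodule.mem_span_singleton_self x)
    rwa [← h] at hmem
  have h5 := Submodule.finrank_lt_finrank_of_lt h4
  omega

/-- greedy extension lemma -/
lemma exists_ext [FiniteDimensional F V] (W U0 : Submodule F V) (j : ℕ)
    (h : finrank F U0 + j ≤ finrank F V) :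
    ∃ U : Submodule F V, U0 ≤ U ∧ finrank F U = finrank F U0 + j ∧
      finrank F ↥(U ⊓ W) ≤
        max (finrank F ↥(U0 ⊓ W)) (finrank F U0 + j + finrank F W - finrank F V) := by
  induction j with
  | zero => exact ⟨U0, le_rfl, by simp, le_max_left _ _⟩
  | succ j ih =>
    obtain ⟨U, hle, hrk, hint⟩ := ih (by omega)
    by_cases hsup : U ⊔ W = ⊤
    · -- pick x ∉ U
      have hUne : U ≠ ⊤ := by
        intro hU
        have := finrank_top F V
        rw [hU] at hrk
        omega
      obtain ⟨x, hx⟩ : ∃ x, x ∉ U := by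
        by_contra hc
        push_neg at hc
        exact hUne (Submodule.eq_top_iff'.2 hc)
      refine ⟨U ⊔ F ∙ x, hle.trans le_sup_left, by rw [finrank_sup_span_singleton U hx, hrk]; omega, ?_⟩
      have hsup' : (U ⊔ F ∙ x) ⊔ W = ⊤ := by
        rw [sup_assoc, sup_comm (F ∙ x) W, ← sup_assoc, hsup]
        exact top_le_iff.1 le_sup_left
      have h1 := Submodule.finrank_sup_add_finrank_inf_eq (U ⊔ F ∙ x) W
      rw [hsup', finrank_top, finrank_sup_span_singleton U hx, hrk] at h1
      omega
    · obtain ⟨x, hx⟩ : ∃ x, x ∉ U ⊔ W := by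
        by_contra hc
        push_neg at hc
        exact hsup (Submodule.eq_top_iff'.2 hc)
      have hxU : x ∉ U := fun h => hx (Submodule.mem_sup_left h)
      refine ⟨U ⊔ F ∙ x, hle.trans le_sup_left, by rw [finrank_sup_span_singleton U hxU, hrk]; omega, ?_⟩
      have key : (U ⊔ F ∙ x) ⊓ W = U ⊓ W := by
        apply le_antisymm
        · intro y hy
          rw [Submodule.mem_inf] at hy
          obtain ⟨hy1, hy2⟩ := hy
          rw [Submodule.mem_sup] at hy1
          obtain ⟨u, hu, z, hz, rfl⟩ := hy1
          rw [Submodule.mem_span_singleton] at hz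
          obtain ⟨c, rfl⟩ := hz
          rcases eq_or_ne c 0 with rfl | hc
          · simpa [Submodule.mem_inf, hu] using hy2
          · exfalso
            apply hx
            have : c • x = (u + c • x) - u := by abel
            have hcx : c • x ∈ U ⊔ W := by
              rw [this]
              exact Submodule.sub_mem _ (Submodule.mem_sup_right hy2) (Submodule.mem_sup_left hu)
            have := (U ⊔ W).smul_mem c⁻¹ hcx
            rwa [smul_smul, inv_mul_cancel₀ hc, one_smul] at this
        · exact inf_le_inf_right W le_sup_left
      rw [key]
      refine hint.trans (max_le_max le_rfl ?_)
      omega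


/-- hyperplane of Γ avoiding a given nonzero x ∈ Γ -/
lemma exists_hyperplane_avoid [FiniteDimensional F V] (Γ : Submodule F V) {x : V}
    (hxΓ : x ∈ Γ) (hx0 : x ≠ 0) :
    ∃ H : Submodule F V, H ≤ Γ ∧ finrank F H + 1 = finrank F Γ ∧ x ∉ H := by
  set x' : ↥Γ := ⟨x, hxΓ⟩ with hx'
  have hx'0 : x' ≠ 0 := fun h => hx0 (by simpa [hx'] using congrArg Subtype.val h)
  obtain ⟨Q, hQ⟩ := Submodule.exists_isCompl (F ∙ x' : Submodule F ↥Γ)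
  refine ⟨Q.map Γ.subtype, Submodule.map_subtype_le Γ Q, ?_, ?_⟩
  · have h1 := Submodule.finrank_add_eq_of_isCompl hQ
    rw [finrank_span_singleton hx'0] at h1
    rw [Submodule.finrank_map_subtype_eq]
    omega
  · intro hmem
    rw [Submodule.mem_map] at hmem
    obtain ⟨y, hyQ, hyx⟩ := hmem
    have hyx' : y = x' := Subtype.ext hyx
    have hmem2 : x' ∈ (F ∙ x') ⊓ Q := ⟨Submodule.mem_span_singleton_self x', hyx' ▸ hyQ⟩
    rw [hQ.inf_eq_bot] at hmem2
    exact hx'0 (by simpa using hmem2)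

lemma maximality [FiniteDimensional F V] {n k t : ℕ} (hV : finrank F V = n + 1)
    (ht : t < k) (hn : 2*k < n + t) (Γ W : Submodule F V) (hΓ : finrank F Γ = t + 3)
    (hW : finrank F W = k + 1)
    (hmeet : ∀ U : Submodule F V, finrank F U = k + 1 → t + 2 ≤ finrank F ↥(U ⊓ Γ) →
      t + 1 ≤ finrank F ↥(W ⊓ U)) :
    t + 2 ≤ finrank F ↥(W ⊓ Γ) := by
  by_contra hc
  push_neg at hc
  -- step 1 : a hyperplane H of Γ with small intersection with W
  obtain ⟨H, hHΓ, hHrk, hHW⟩ :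
      ∃ H : Submodule F V, H ≤ Γ ∧ finrank F H = t + 2 ∧ finrank F ↥(H ⊓ W) ≤ t := by
    rcases eq_or_ne (W ⊓ Γ) ⊥ with hb | hb
    · have hΓne : Γ ≠ ⊥ := by
        intro h; rw [h, finrank_bot] at hΓ; omega
      obtain ⟨x, hxΓ, hx0⟩ := Γ.exists_mem_ne_zero_of_ne_bot hΓne
      obtain ⟨H, h1, h2, _⟩ := exists_hyperplane_avoid Γ hxΓ hx0
      refine ⟨H, h1, by omega, ?_⟩
      have : H ⊓ W ≤ W ⊓ Γ := le_inf inf_le_right (inf_le_left.trans h1)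
      have := Submodule.finrank_mono this
      rw [hb, finrank_bot] at this
      omega
    · obtain ⟨x, hxm, hx0⟩ := (W ⊓ Γ).exists_mem_ne_zero_of_ne_bot hb
      rw [Submodule.mem_inf] at hxm
      obtain ⟨H, h1, h2, h3⟩ := exists_hyperplane_avoid Γ hxm.2 hx0
      refine ⟨H, h1, by omega, ?_⟩
      have hlt : H ⊓ W < W ⊓ Γ := by
        refine lt_of_le_of_ne (le_inf inf_le_right (inf_le_left.trans h1)) (fun h => h3 ?_)
        have : x ∈ H ⊓ W := h ▸ (Submodule.mem_inf.2 hxm)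
        exact this.1
      have := Submodule.finrank_lt_finrank_of_lt hlt
      omega
  -- step 2 : extend H to a k-space U with small intersection with W
  obtain ⟨U, hHU, hUrk, hUW⟩ := exists_ext W H (k - t - 1) (by rw [hHrk, hV]; omega)
  rw [hHrk] at hUrk hUW
  have hUk : finrank F U = k + 1 := by omega
  have hbound : finrank F ↥(U ⊓ W) ≤ t := by
    refine hUW.trans (max_le hHW ?_)
    rw [hW, hV]; omega
  have hUΓ : t + 2 ≤ finrank F ↥(U ⊓ Γ) := by
    have : H ≤ U ⊓ Γ := le_inf hHU hHΓ
    have := Submodule.finrank_mono this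
    omega
  have := hmeet U hUk hUΓ
  rw [inf_comm] at this
  omega


-- finrank of comap mkQ
lemma finrank_comap_mkQ [FiniteDimensional F V] (U : Submodule F V) (W' : Submodule F (V ⧸ U)) :
    finrank F ↥(W'.comap U.mkQ) = finrank F ↥W' + finrank F ↥U := by
  set P := W'.comap U.mkQ with hP
  have hUP : U ≤ P := by
    intro x hx
    simp only [hP, Submodule.mem_comap]
    have : U.mkQ x = 0 := by rwa [← LinearMap.mem_ker, Submodule.ker_mkQ]
    rw [this]; exact W'.zero_mem
  have hmap : P.map U.mkQ = W' :=
    Submodule.map_comap_eq_of_surjective (Submodule.mkQ_surjective U) W'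
  have h1 := LinearMap.finrank_range_add_finrank_ker (U.mkQ.domRestrict P)
  rw [LinearMap.range_domRestrict, LinearMap.ker_domRestrict, hmap] at h1
  have h2 : finrank F ↥(Submodule.comap P.subtype U) = finrank F ↥U := by
    have : (Submodule.comap P.subtype U).map P.subtype = P ⊓ U := Submodule.map_comap_subtype P U
    rw [← Submodule.finrank_map_subtype_eq P, this, inf_eq_right.2 hUP]
  rw [Submodule.ker_mkQ, h2] at h1
  omega

lemma card_ge_eq [FiniteDimensional F V] (U : Submodule F V) (d : ℕ)
    (hU : finrank F U ≤ d) :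
    Nat.card {W : Submodule F V // U ≤ W ∧ finrank F W = d} =
      Nat.card {W' : Submodule F (V ⧸ U) // finrank F W' = d - finrank F U} := by
  refine Nat.card_congr ⟨fun W => ⟨(W.1).map U.mkQ, ?_⟩, fun W' => ⟨W'.1.comap U.mkQ, ?_, ?_⟩, ?_, ?_⟩
  · have h1 : ((W.1).map U.mkQ).comap U.mkQ = W.1 := by
      rw [Submodule.comap_map_eq, Submodule.ker_mkQ, sup_eq_left.2 W.2.1]
    have h2 := finrank_comap_mkQ U ((W.1).map U.mkQ)
    rw [h1, W.2.2] at h2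
    omega
  · intro x hx
    simp only [Submodule.mem_comap]
    have : U.mkQ x = 0 := by rwa [← LinearMap.mem_ker, Submodule.ker_mkQ]
    rw [this]; exact W'.1.zero_mem
  · rw [finrank_comap_mkQ U W'.1, W'.2]; omega
  · rintro ⟨W, hUW, hW⟩
    refine Subtype.ext ?_
    simp only
    rw [Submodule.comap_map_eq, Submodule.ker_mkQ, sup_eq_left.2 hUW]
  · rintro ⟨W', hW'⟩
    refine Subtype.ext ?_
    simp only
    exact Submodule.map_comap_eq_of_surjective (Submodule.mkQ_surjective U) W'

variable [Fintype F]


/-- number of linearly independent d-tuples in a finite vector space -/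
lemma card_LI [Fintype V] (d : ℕ) (hd : d ≤ finrank F V) :
    Nat.card {v : Fin d → V // LinearIndependent F v} =
      ∏ i ∈ Finset.range d, (Fintype.card F ^ finrank F V - Fintype.card F ^ i) := by
  induction d with
  | zero =>
    rw [Finset.prod_range_zero, Nat.card_eq_one_iff_unique.2]
    exact ⟨⟨fun a b => Subtype.ext (funext fun i => i.elim0)⟩, ⟨⟨fun i => i.elim0, linearIndependent_empty_type⟩⟩⟩
  | succ d ih =>
    have hd' : d ≤ finrank F V := by omega
    -- equivalence with pairs
    have e : {v : Fin (d+1) → V // LinearIndependent F v} ≃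
        Σ u : {v : Fin d → V // LinearIndependent F v}, {x : V // x ∉ span F (Set.range u.1)} :=
      { toFun := fun v => ⟨⟨Fin.tail v.1, (linearIndependent_fin_succ.1 v.2).1⟩,
          ⟨v.1 0, (linearIndependent_fin_succ.1 v.2).2⟩⟩
        invFun := fun p => ⟨Fin.cons p.2.1 p.1.1, linearIndependent_fin_cons.2 ⟨p.1.2, p.2.2⟩⟩
        left_inv := fun v => Subtype.ext (Fin.cons_self_tail v.1)
        right_inv := fun p => by
          refine Sigma.ext (Subtype.ext ?_) (Subtype.heq_iff_coe_eq ?_ |>.2 ?_)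
          · simp
          · intro x; simp
          · simp }
    rw [Nat.card_congr e]
    have hfib : ∀ u : {v : Fin d → V // LinearIndependent F v},
        Nat.card {x : V // x ∉ span F (Set.range u.1)} =
          Fintype.card F ^ finrank F V - Fintype.card F ^ d := by
      intro u
      have h1 : Fintype.card ↥(span F (Set.range u.1)) = Fintype.card F ^ d := by
        rw [card_eq_pow_finrank (K := F), finrank_span_eq_card u.2, Fintype.card_fin]
      rw [Nat.card_eq_fintype_card, Fintype.card_subtype_compl,
        card_eq_pow_finrank (K := F) (V := V), h1]
    calc Nat.card ((u : {v : Fin d → V // LinearIndependent F v}) ×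
            {x : V // x ∉ span F (Set.range u.1)})
        = ∑ u : {v : Fin d → V // LinearIndependent F v},
            Nat.card {x : V // x ∉ span F (Set.range u.1)} := by
          rw [Nat.card_eq_fintype_card, Fintype.card_sigma]
          exact Finset.sum_congr rfl fun u _ => (Nat.card_eq_fintype_card).symm
      _ = ∑ _u : {v : Fin d → V // LinearIndependent F v},
            (Fintype.card F ^ finrank F V - Fintype.card F ^ d) :=
          Finset.sum_congr rfl fun u _ => hfib u
      _ = Nat.card {v : Fin d → V // LinearIndependent F v} *
            (Fintype.card F ^ finrank F V - Fintype.card F ^ d) := by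
          rw [Finset.sum_const, Finset.card_univ, smul_eq_mul, Nat.card_eq_fintype_card]
      _ = ∏ i ∈ Finset.range (d+1), (Fintype.card F ^ finrank F V - Fintype.card F ^ i) := by
          rw [ih hd', Finset.prod_range_succ]

lemma card_fiber [Fintype V] [FiniteDimensional F V] (d : ℕ) (W : Submodule F V)
    (hW : finrank F W = d) :
    Nat.card {v : Fin d → V // LinearIndependent F v ∧ span F (Set.range v) = W} =
      ∏ i ∈ Finset.range d, (Fintype.card F ^ d - Fintype.card F ^ i) := by
  subst hW
  have e : {v : Fin (finrank F W) → V // LinearIndependent F v ∧ span F (Set.range v) = W} ≃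
      {v : Fin (finrank F W) → ↥W // LinearIndependent F v} :=
    { toFun := fun v => ⟨fun i => ⟨v.1 i, by
        have : v.1 i ∈ span F (Set.range v.1) := subset_span (Set.mem_range_self i)
        rwa [v.2.2] at this⟩, by
        apply LinearIndependent.of_comp W.subtype
        convert v.2.1
        rfl⟩
      invFun := fun v => ⟨W.subtype ∘ v.1, v.2.map' W.subtype W.ker_subtype, by
        have htop : span F (Set.range v.1) = ⊤ :=
          v.2.span_eq_top_of_card_eq_finrank' (by rw [Fintype.card_fin])
        rw [Set.range_comp, Submodule.span_image, htop, Submodule.map_subtype_top]⟩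
      left_inv := fun v => Subtype.ext rfl
      right_inv := fun v => Subtype.ext (funext fun i => Subtype.ext rfl) }
  rw [Nat.card_congr e]
  exact card_LI _ le_rfl

lemma card_subspaces_mul [Fintype V] [FiniteDimensional F V] (d : ℕ) (hd : d ≤ finrank F V) :
    Nat.card {W : Submodule F V // finrank F W = d} *
        ∏ i ∈ Finset.range d, (Fintype.card F ^ d - Fintype.card F ^ i) =
      ∏ i ∈ Finset.range d, (Fintype.card F ^ finrank F V - Fintype.card F ^ i) := by
  haveI : Finite (Submodule F V) :=
    Finite.of_injective (fun W => (W : Set V)) SetLike.coe_injective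
  haveI : Fintype (Submodule F V) := Fintype.ofFinite _
  have e : {v : Fin d → V // LinearIndependent F v} ≃
      Σ W : {W : Submodule F V // finrank F W = d},
        {v : Fin d → V // LinearIndependent F v ∧ span F (Set.range v) = W.1} :=
    { toFun := fun v => ⟨⟨span F (Set.range v.1), by
        rw [finrank_span_eq_card v.2, Fintype.card_fin]⟩, ⟨v.1, v.2, rfl⟩⟩
      invFun := fun p => ⟨p.2.1, p.2.2.1⟩
      left_inv := fun v => rfl
      right_inv := fun p => by
        obtain ⟨⟨W, hW⟩, ⟨v, hv1, hv2⟩⟩ := p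
        refine Sigma.ext (Subtype.ext hv2) (Subtype.heq_iff_coe_eq ?_ |>.2 rfl)
        intro x
        constructor
        · rintro ⟨h1, h2⟩; exact ⟨h1, h2.trans hv2⟩
        · rintro ⟨h1, h2⟩; exact ⟨h1, h2.trans hv2.symm⟩ }
  have h1 := card_LI (F := F) (V := V) d hd
  rw [Nat.card_congr e, Nat.card_eq_fintype_card, Fintype.card_sigma] at h1
  rw [← h1]
  have : ∀ W : {W : Submodule F V // finrank F W = d},
      Fintype.card {v : Fin d → V // LinearIndependent F v ∧ span F (Set.range v) = W.1} =
        ∏ i ∈ Finset.range d, (Fintype.card F ^ d - Fintype.card F ^ i) := by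
    intro W
    rw [← Nat.card_eq_fintype_card]
    exact card_fiber d W.1 W.2
  rw [Finset.sum_congr rfl (fun W _ => this W), Finset.sum_const, Finset.card_univ, smul_eq_mul,
    Nat.card_eq_fintype_card]


lemma card_subspaces_real [Fintype V] [FiniteDimensional F V]
    (hcard : Fintype.card F = q) (hq : 2 ≤ q) (d : ℕ) (hd : d ≤ Module.finrank F V)
    (hm : Module.finrank F V = m) :
    (Nat.card {W : Submodule F V // Module.finrank F W = d} : ℝ) = gbin q m (d : ℤ) := by
  subst hm hcard
  set q := Fintype.card F with hq'
  have key := card_subspaces_mul (F := F) (V := V) d hd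
  have hcast : ((∏ i ∈ Finset.range d, (q ^ d - q ^ i) : ℕ) : ℝ) =
      ∏ i ∈ Finset.range d, ((q:ℝ)^d - (q:ℝ)^i) := by
    rw [Nat.cast_prod]
    refine Finset.prod_congr rfl fun i hi => ?_
    rw [Finset.mem_range] at hi
    rw [Nat.cast_sub (Nat.pow_le_pow_right (by omega) (by omega)), Nat.cast_pow, Nat.cast_pow]
  have hcast2 : ((∏ i ∈ Finset.range d, (q ^ Module.finrank F V - q ^ i) : ℕ) : ℝ) =
      ∏ i ∈ Finset.range d, ((q:ℝ)^(Module.finrank F V) - (q:ℝ)^i) := by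
    rw [Nat.cast_prod]
    refine Finset.prod_congr rfl fun i hi => ?_
    rw [Finset.mem_range] at hi
    rw [Nat.cast_sub (Nat.pow_le_pow_right (by omega) (by omega)), Nat.cast_pow, Nat.cast_pow]
  have keyR : (Nat.card {W : Submodule F V // Module.finrank F W = d} : ℝ) *
      ∏ i ∈ Finset.range d, ((q:ℝ)^d - (q:ℝ)^i) =
      ∏ i ∈ Finset.range d, ((q:ℝ)^(Module.finrank F V) - (q:ℝ)^i) := by
    rw [← hcast, ← hcast2, ← Nat.cast_mul, key]
  have hg := gbin_prod_eq q (Module.finrank F V) d hq hd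
  have hPne : ∏ i ∈ Finset.range d, ((q:ℝ)^d - (q:ℝ)^i) ≠ 0 := by
    refine Finset.prod_ne_zero_iff.2 fun i hi => ?_
    rw [Finset.mem_range] at hi
    have h1 : (q:ℝ)^i < (q:ℝ)^d :=
      pow_lt_pow_right₀ (by exact_mod_cast hq) hi
    linarith
  exact mul_right_cancel₀ hPne (keyR.trans hg.symm)


end Aux

lemma card_ge_real {F V : Type*} [Field F] [Fintype F] [AddCommGroup V] [Module F V]
    [Fintype V] [FiniteDimensional F V] {q : ℕ}
    (hcard : Fintype.card F = q) (hq : 2 ≤ q)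
    (X : Submodule F V) (d : ℕ) (h1 : Module.finrank F X ≤ d) (h2 : d ≤ Module.finrank F V) :
    (Nat.card {W : Submodule F V // X ≤ W ∧ Module.finrank F W = d} : ℝ) =
      gbin q (Module.finrank F V - Module.finrank F X) (((d - Module.finrank F X : ℕ)) : ℤ) := by
  rw [card_ge_eq X d h1]
  haveI : Finite (V ⧸ X) := Finite.of_surjective _ (Submodule.mkQ_surjective X)
  haveI : Fintype (V ⧸ X) := Fintype.ofFinite _
  have hquot : Module.finrank F (V ⧸ X) = Module.finrank F V - Module.finrank F X := by
    have h3 := Submodule.finrank_quotient_add_finrank X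
    omega
  exact card_subspaces_real hcard hq _ (by omega) hquot

lemma card_hyperplanes {F V : Type*} [Field F] [Fintype F] [AddCommGroup V] [Module F V]
    [Fintype V] [FiniteDimensional F V] {q : ℕ}
    (hcard : Fintype.card F = q) (hq : 2 ≤ q) (Γ : Submodule F V) {c : ℕ}
    (hΓ : Module.finrank F Γ = c + 1) :
    (Nat.card {H : Submodule F V // H ≤ Γ ∧ Module.finrank F H = c} : ℝ) = theta q c := by
  haveI : Fintype ↥Γ := Fintype.ofFinite _
  have e : {H' : Submodule F ↥Γ // Module.finrank F H' = c} ≃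
      {H : Submodule F V // H ≤ Γ ∧ Module.finrank F H = c} :=
    { toFun := fun H' => ⟨H'.1.map Γ.subtype, Submodule.map_subtype_le Γ H'.1,
        by rw [Submodule.finrank_map_subtype_eq]; exact H'.2⟩
      invFun := fun H => ⟨H.1.comap Γ.subtype, by
        have hm : (H.1.comap Γ.subtype).map Γ.subtype = Γ ⊓ H.1 :=
          Submodule.map_comap_subtype Γ H.1
        rw [← Submodule.finrank_map_subtype_eq Γ, hm, inf_eq_right.2 H.2.1]
        exact H.2.2⟩
      left_inv := fun H' => Subtype.ext (by
        show (H'.1.map Γ.subtype).comap Γ.subtype = H'.1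
        rw [Submodule.comap_map_eq, Submodule.ker_subtype, sup_bot_eq])
      right_inv := fun H => Subtype.ext (by
        have hm : (H.1.comap Γ.subtype).map Γ.subtype = Γ ⊓ H.1 :=
          Submodule.map_comap_subtype Γ H.1
        show (H.1.comap Γ.subtype).map Γ.subtype = H.1
        rw [hm, inf_eq_right.2 H.2.1]) }
  rw [← Nat.card_congr e, card_subspaces_real hcard hq c (by omega) hΓ,
    theta, ← gbin_hyperplane q c hq]

lemma ncard_finset_biUnion {α β : Type*} [Finite β] (s : Finset α) (B : α → Set β) :
    (∀ a1 ∈ s, ∀ a2 ∈ s, a1 ≠ a2 → Disjoint (B a1) (B a2)) →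
    (⋃ a ∈ s, B a).ncard = ∑ a ∈ s, (B a).ncard := by
  classical
  induction s using Finset.induction with
  | empty => intro _; simp
  | @insert a s ha ih =>
    intro hdisj
    rw [Finset.set_biUnion_insert, Finset.sum_insert ha,
      Set.ncard_union_eq ?_ (Set.toFinite _) (Set.toFinite _),
      ih (fun a1 h1 a2 h2 hne => hdisj a1 (Finset.mem_insert_of_mem h1)
        a2 (Finset.mem_insert_of_mem h2) hne)]
    rw [Set.disjoint_left]
    intro y hy1 hy2
    rw [Set.mem_iUnion₂] at hy2
    obtain ⟨x, hxs, hyx⟩ := hy2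
    have hax : a ≠ x := fun h => ha (h ▸ hxs)
    exact Set.disjoint_left.1
      (hdisj a (Finset.mem_insert_self a s) x (Finset.mem_insert_of_mem hxs) hax) hy1 hyx

theorem stmt_13 (q n k t : ℕ) (F : Type*) [Field F] [Fintype F]
    (hF : Fintype.card F = q) (ht : t < k) (hn : 2*k < n + t)
    (Γ : Submodule F (Fin (n+1) → F)) (hΓ : Module.finrank F Γ = t + 3)
    (S : Set (Submodule F (Fin (n+1) → F)))
    (hS : S = {W : Submodule F (Fin (n+1) → F) | Module.finrank F W = k + 1 ∧ t + 2 ≤ Module.finrank F ↥(W ⊓ Γ)}) :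
    (∀ W1 ∈ S, ∀ W2 ∈ S, t + 1 ≤ Module.finrank F ↥(W1 ⊓ W2)) ∧
    (∀ W : Submodule F (Fin (n+1) → F), Module.finrank F W = k + 1 →
      (∀ U ∈ S, t + 1 ≤ Module.finrank F ↥(W ⊓ U)) → W ∈ S) ∧
    (Nat.card S : ℝ) = gbin q (n-t-2) ((k:ℤ)-t-2) +
      theta q (t+2) * (gbin q (n-t-1) ((k:ℤ)-t-1) - gbin q (n-t-2) ((k:ℤ)-t-2)) := by
  subst hS
  set V := Fin (n+1) → F with hVdef
  have hV : Module.finrank F V = n + 1 := Module.finrank_fin_fun F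
  have hq2 : 2 ≤ q := hF ▸ Fintype.one_lt_card
  refine ⟨?_, ?_, ?_⟩
  · rintro W1 ⟨h1k, h1Γ⟩ W2 ⟨h2k, h2Γ⟩
    have key : finrank F ↥((W1 ⊓ Γ) ⊓ (W2 ⊓ Γ)) ≤ finrank F ↥(W1 ⊓ W2) :=
      Submodule.finrank_mono
        (le_inf (inf_le_left.trans inf_le_left) (inf_le_right.trans inf_le_left))
    have h1 := Submodule.finrank_sup_add_finrank_inf_eq (W1 ⊓ Γ) (W2 ⊓ Γ)
    have h2 : finrank F ↥((W1 ⊓ Γ) ⊔ (W2 ⊓ Γ)) ≤ finrank F Γ :=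
      Submodule.finrank_mono (sup_le inf_le_right inf_le_right)
    omega
  · intro W hWk hmeet
    exact ⟨hWk, maximality hV ht hn Γ W hΓ hWk (fun U hU1 hU2 => hmeet U ⟨hU1, hU2⟩)⟩
  · -- counting
    haveI : Finite (Submodule F V) :=
      Finite.of_injective (fun W : Submodule F V => (W : Set V)) SetLike.coe_injective
    haveI : Fintype (Submodule F V) := Fintype.ofFinite _
    set A : Set (Submodule F V) := {W | Γ ≤ W ∧ finrank F W = k+1} with hA
    set ℋ : Set (Submodule F V) := {H | H ≤ Γ ∧ finrank F H = t+2} with hH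
    set B : Submodule F V → Set (Submodule F V) :=
      fun H => {W | W ⊓ Γ = H ∧ finrank F W = k+1} with hB
    have hinfle : ∀ W : Submodule F V, finrank F ↥(W ⊓ Γ) ≤ t + 3 := fun W =>
      hΓ ▸ Submodule.finrank_mono inf_le_right
    -- decomposition of the set of W ⊇ H, for H ∈ ℋ
    have hdecomp : ∀ H, H ∈ ℋ →
        {W : Submodule F V | H ≤ W ∧ finrank F W = k+1} = B H ∪ A := by
      rintro H ⟨hHΓ, hHrk⟩
      ext W
      simp only [Set.mem_setOf_eq, Set.mem_union, hB, hA]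
      constructor
      · rintro ⟨hHW, hWk⟩
        have hle : H ≤ W ⊓ Γ := le_inf hHW hHΓ
        have h1 : t + 2 ≤ finrank F ↥(W ⊓ Γ) := hHrk ▸ Submodule.finrank_mono hle
        rcases Nat.lt_or_ge (finrank F ↥(W ⊓ Γ)) (t+3) with hlt | hge
        · have h2 : finrank F ↥(W ⊓ Γ) ≤ finrank F ↥H := by rw [hHrk]; omega
          exact Or.inl ⟨(Submodule.eq_of_le_of_finrank_le hle h2).symm, hWk⟩
        · have h2 : finrank F ↥Γ ≤ finrank F ↥(W ⊓ Γ) := by rw [hΓ]; omega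
          have heq : W ⊓ Γ = Γ := Submodule.eq_of_le_of_finrank_le inf_le_right h2
          exact Or.inr ⟨heq ▸ inf_le_left, hWk⟩
      · rintro (⟨hWΓ, hWk⟩ | ⟨hΓW, hWk⟩)
        · exact ⟨hWΓ ▸ inf_le_left, hWk⟩
        · exact ⟨hHΓ.trans hΓW, hWk⟩
    -- disjointness of B H and A
    have hdisjBA : ∀ H, H ∈ ℋ → Disjoint (B H) A := by
      rintro H ⟨hHΓ, hHrk⟩
      rw [Set.disjoint_left]
      rintro W ⟨hWΓ, _⟩ ⟨hΓW, _⟩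
      rw [inf_eq_right.2 hΓW] at hWΓ
      rw [hWΓ, hHrk] at hΓ
      omega
    -- the partition of S
    have hSdecomp : {W : Submodule F V | finrank F W = k + 1 ∧ t + 2 ≤ finrank F ↥(W ⊓ Γ)} =
        A ∪ ⋃ H ∈ ℋ, B H := by
      ext W
      simp only [Set.mem_setOf_eq, Set.mem_union, Set.mem_iUnion, hA, hB, hH]
      constructor
      · rintro ⟨hWk, hWΓ⟩
        rcases Nat.lt_or_ge (finrank F ↥(W ⊓ Γ)) (t+3) with hlt | hge
        · exact Or.inr ⟨W ⊓ Γ, ⟨inf_le_right, by omega⟩, rfl, hWk⟩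
        · have h2 : finrank F ↥Γ ≤ finrank F ↥(W ⊓ Γ) := by rw [hΓ]; omega
          have heq : W ⊓ Γ = Γ := Submodule.eq_of_le_of_finrank_le inf_le_right h2
          exact Or.inl ⟨heq ▸ inf_le_left, hWk⟩
      · rintro (⟨hΓW, hWk⟩ | ⟨H, ⟨hHΓ, hHrk⟩, hWΓ, hWk⟩)
        · refine ⟨hWk, ?_⟩
          rw [inf_eq_right.2 hΓW, hΓ]
          omega
        · exact ⟨hWk, by rw [hWΓ, hHrk]⟩
    have hfinH : ℋ.Finite := Set.toFinite ℋ
    set ℋf : Finset (Submodule F V) := hfinH.toFinset with hHf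
    -- cardinality of A
    have eA : Nat.card ↥A = Nat.card {W : Submodule F V // Γ ≤ W ∧ finrank F W = k+1} :=
      Nat.card_congr (Equiv.subtypeEquivRight fun W => Iff.rfl)
    have cA : ((A.ncard : ℕ) : ℝ) = gbin q (n-t-2) ((k:ℤ)-t-2) := by
      rw [← Nat.card_coe_set_eq, eA]
      rcases Nat.lt_or_ge k (t+2) with hk | hk
      · have hAempty : Nat.card {W : Submodule F V // Γ ≤ W ∧ finrank F W = k+1} = 0 := by
          rw [Nat.card_eq_zero]
          left
          rw [isEmpty_subtype]
          rintro W ⟨hΓW, hWk⟩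
          have hmono := Submodule.finrank_mono hΓW
          rw [hΓ, hWk] at hmono
          omega
        rw [hAempty, gbin, if_neg (by omega)]
        simp
      · have hGe := card_ge_real hF hq2 Γ (k+1) (by rw [hΓ]; omega) (by rw [hV]; omega)
        rw [hV, hΓ] at hGe
        rw [hGe]
        congr 1
        · omega
        · omega
    -- cardinality of each B H
    have cBH : ∀ H ∈ ℋf, (((B H).ncard : ℕ) : ℝ) =
        gbin q (n-t-1) ((k:ℤ)-t-1) - gbin q (n-t-2) ((k:ℤ)-t-2) := by
      intro H hHmem
      rw [hHf, Set.Finite.mem_toFinset] at hHmem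
      obtain ⟨hHΓ, hHrk⟩ := hHmem
      have hGe := card_ge_real hF hq2 H (k+1) (by rw [hHrk]; omega) (by rw [hV]; omega)
      rw [hV, hHrk] at hGe
      have hGe2 : gbin q (n + 1 - (t+2)) (((k + 1 - (t+2) : ℕ)) : ℤ) =
          gbin q (n-t-1) ((k:ℤ)-t-1) := by
        congr 1
        · omega
        · omega
      have eGe : Nat.card {W : Submodule F V // H ≤ W ∧ finrank F W = k+1} =
          Nat.card ↥{W : Submodule F V | H ≤ W ∧ finrank F W = k+1} :=
        Nat.card_congr (Equiv.subtypeEquivRight fun W => Iff.rfl)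
      have hcardsplit : Nat.card {W : Submodule F V // H ≤ W ∧ finrank F W = k+1} =
          (B H).ncard + A.ncard := by
        rw [eGe, Nat.card_coe_set_eq, hdecomp H ⟨hHΓ, hHrk⟩,
          Set.ncard_union_eq (hdisjBA H ⟨hHΓ, hHrk⟩) (Set.toFinite _) (Set.toFinite _)]
      rw [hcardsplit, hGe2] at hGe
      push_cast at hGe
      rw [← cA]
      linarith
    -- cardinality of ℋ
    have cH : ((ℋf.card : ℕ) : ℝ) = theta q (t+2) := by
      have h1 : ℋf.card = ℋ.ncard := (Set.ncard_eq_toFinset_card ℋ hfinH).symm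
      have eH : Nat.card ↥ℋ =
          Nat.card {H : Submodule F V // H ≤ Γ ∧ finrank F H = t+2} :=
        Nat.card_congr (Equiv.subtypeEquivRight fun W => Iff.rfl)
      rw [h1, ← Nat.card_coe_set_eq, eH]
      exact card_hyperplanes hF hq2 Γ hΓ
    -- assembling
    have hpair : ∀ H1 ∈ ℋf, ∀ H2 ∈ ℋf, H1 ≠ H2 → Disjoint (B H1) (B H2) := by
      intro H1 _ H2 _ hne
      rw [Set.disjoint_left]
      intro W hW1 hW2
      exact hne (hW1.1.symm.trans hW2.1)
    have hcoe : ⋃ H ∈ ℋ, B H = ⋃ H ∈ ℋf, B H := by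
      ext y
      simp only [Set.mem_iUnion₂, hHf, Set.Finite.mem_toFinset]
    have hdisjAU : Disjoint A (⋃ H ∈ ℋf, B H) := by
      rw [Set.disjoint_left]
      intro W hWA hWB
      rw [Set.mem_iUnion₂] at hWB
      obtain ⟨H, hHmem, hWBH⟩ := hWB
      rw [hHf, Set.Finite.mem_toFinset] at hHmem
      exact Set.disjoint_left.1 (hdisjBA H hHmem) hWBH hWA
    have Scard : Nat.card ↥(A ∪ ⋃ H ∈ ℋ, B H) = A.ncard + ∑ H ∈ ℋf, (B H).ncard := by
      rw [Nat.card_coe_set_eq, hcoe,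
        Set.ncard_union_eq hdisjAU (Set.toFinite _) (Set.toFinite _),
        ncard_finset_biUnion ℋf B hpair]
    rw [hSdecomp, Scard]
    push_cast
    rw [cA, Finset.sum_congr rfl cBH, Finset.sum_const, nsmul_eq_mul, cH]
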